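/- Let p be a prime, g ≥ 1, and let G be a group of order p^{2g} that admits at least (p^{2g}-1)/(p-1) distinct normal subgroups of index p (equivalently, at least (p^{2g}-1)/(p-1) distinct surjections onto Z/pZ up to automorphism of the target). Then G is isomorphic to (Z/pZ)^{2g}. -/

import Mathlib

/-- Let `p` be a prime, `g ≥ 1`, and `G` a group of order `p^(2g)`
admitting at least `(p^(2g) - 1)/(p - 1)` distinct normal subgroups of index
`p`. Then `G` is isomorphic to `(ℤ/pℤ)^(2g)`. -/
theorem elementaryAbelian_of_many_index_p_subgroups
    (p : ℕ) (hp : p.Prime) (g : ℕ) (hg : 1 ≤ g)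
    (G : Type*) [Group G] (hG : Nat.card G = p ^ (2 * g))
    (S : Finset (Subgroup G))
    (hcard : (p ^ (2 * g) - 1) / (p - 1) ≤ S.card)
    (hS : ∀ K ∈ S, K.Normal ∧ K.index = p) :
    Nonempty (G ≃* Multiplicative (Fin (2 * g) → ZMod p)) := by
  classical
  haveI hp' : Fact p.Prime := ⟨hp⟩
  haveI : Finite G := Nat.finite_of_card_ne_zero (by rw [hG]; exact (pow_pos hp.pos _).ne')
  -- the set of p-th powers
  set s : Set G := Set.range fun x : G => x ^ p with hs
  haveI hPnormal : (Subgroup.closure s).Normal := by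
    constructor
    intro n hn g0
    have h1 : (MulAut.conj g0).toMonoidHom '' s ⊆ s := by
      rintro _ ⟨_, ⟨x, rfl⟩, rfl⟩
      exact ⟨MulAut.conj g0 x, (map_pow _ _ _).symm⟩
    have h2 := Subgroup.mem_map_of_mem (MulAut.conj g0).toMonoidHom hn
    rw [MonoidHom.map_closure] at h2
    have h3 := (Subgroup.closure_mono h1) h2
    simpa [MulAut.conj_apply, mul_assoc] using h3
  set M : Subgroup G := commutator G ⊔ Subgroup.closure s with hM
  haveI hMnormal : M.Normal := Subgroup.sup_normal _ _
  -- the quotient Q := G ⧸ M is commutative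
  have hcomm : ∀ a b : G ⧸ M, a * b = b * a := by
    intro a b
    induction a using QuotientGroup.induction_on with | _ a =>
    induction b using QuotientGroup.induction_on with | _ b =>
    rw [← QuotientGroup.mk_mul, ← QuotientGroup.mk_mul, QuotientGroup.eq]
    open scoped commutatorElement in
    have : (a * b)⁻¹ * (b * a) = ⁅b⁻¹, a⁻¹⁆ := by group
    rw [this]
    exact le_sup_left (α := Subgroup G)
      (by rw [commutator_def]
          exact Subgroup.commutator_mem_commutator (Subgroup.mem_top _) (Subgroup.mem_top _))
  letI : CommGroup (G ⧸ M) := { (inferInstance : Group (G ⧸ M)) with mul_comm := hcomm }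
  -- the quotient has exponent p
  have hpow : ∀ x : G ⧸ M, x ^ p = 1 := by
    intro x
    induction x using QuotientGroup.induction_on with | _ a =>
    have : ((a : G ⧸ M)) ^ p = ((a ^ p : G) : G ⧸ M) := by
      rw [← QuotientGroup.mk_pow]
    rw [this, QuotientGroup.eq_one_iff]
    exact le_sup_right (α := Subgroup G) (Subgroup.subset_closure ⟨a, rfl⟩)
  haveI mQ : Module (ZMod p) (Additive (G ⧸ M)) := AddCommGroup.zmodModule (by
    intro x
    apply Additive.toMul.injective
    rw [toMul_nsmul]
    exact hpow _)
  -- construction of a surjection onto `Multiplicative (ZMod p)` for each `K ∈ S`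
  have key : ∀ K ∈ S, ∃ φ : G →* Multiplicative (ZMod p),
      (∀ x, φ x = 1 ↔ x ∈ K) ∧ Function.Surjective φ := by
    intro K hK
    obtain ⟨hnorm, hidx⟩ := hS K hK
    haveI := hnorm
    have hcardQ : Nat.card (G ⧸ K) = p := hidx
    haveI : IsCyclic (G ⧸ K) := isCyclic_of_prime_card hcardQ
    let e1 : (G ⧸ K) ≃* Multiplicative (ZMod (Nat.card (G ⧸ K))) :=
      (zmodCyclicMulEquiv inferInstance).symm
    let e2 : Multiplicative (ZMod (Nat.card (G ⧸ K))) ≃* Multiplicative (ZMod p) :=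
      AddEquiv.toMultiplicative (ZMod.ringEquivCongr hcardQ).toAddEquiv
    refine ⟨(e2.toMonoidHom.comp e1.toMonoidHom).comp (QuotientGroup.mk' K), ?_, ?_⟩
    · intro x
      simp only [MonoidHom.comp_apply, MulEquiv.coe_toMonoidHom]
      rw [map_eq_one_iff _ e2.injective, map_eq_one_iff _ e1.injective]
      simp [QuotientGroup.eq_one_iff]
    · exact e2.surjective.comp (e1.surjective.comp (QuotientGroup.mk'_surjective K))
  choose φ hφker hφsurj using key
  -- injection from `Option (S × (ZMod p)ˣ)` into homs
  let u2e : (ZMod p)ˣ → (Multiplicative (ZMod p) ≃* Multiplicative (ZMod p)) :=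
    fun u => AddEquiv.toMultiplicative (DistribMulAction.toAddAut (ZMod p)ˣ (ZMod p) u)
  have u2e_apply : ∀ (u : (ZMod p)ˣ) (a : ZMod p),
      u2e u (Multiplicative.ofAdd a) = Multiplicative.ofAdd ((u : ZMod p) * a) := by
    intro u a; rfl
  let Ψ : Option ({K // K ∈ S} × (ZMod p)ˣ) → (G →* Multiplicative (ZMod p)) :=
    fun o => match o with
    | none => 1
    | some (K, u) => (u2e u).toMonoidHom.comp (φ K.1 K.2)
  have hΨker : ∀ (K : {K // K ∈ S}) (u : (ZMod p)ˣ) (x : G),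
      Ψ (some (K, u)) x = 1 ↔ x ∈ K.1 := by
    intro K u x
    show (u2e u) (φ K.1 K.2 x) = 1 ↔ x ∈ K.1
    rw [map_eq_one_iff _ (u2e u).injective]
    exact hφker K.1 K.2 x
  have hΨ : Function.Injective Ψ := by
    intro o o' h
    match o, o' with
    | none, none => rfl
    | none, some (K, u) =>
        exfalso
        have hKtop : K.1 = ⊤ := by
          ext x
          simp only [Subgroup.mem_top, iff_true]
          rw [← hΨker K u x, ← h]
          rfl
        have := (hS K.1 K.2).2
        rw [hKtop, Subgroup.index_top] at this
        exact hp.one_lt.ne this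
    | some (K, u), none =>
        exfalso
        have hKtop : K.1 = ⊤ := by
          ext x
          simp only [Subgroup.mem_top, iff_true]
          rw [← hΨker K u x, h]
          rfl
        have := (hS K.1 K.2).2
        rw [hKtop, Subgroup.index_top] at this
        exact hp.one_lt.ne this
    | some (K, u), some (K', u') =>
        have hKK' : K = K' := by
          apply Subtype.ext
          ext x
          rw [← hΨker K u x, ← hΨker K' u' x, h]
        subst hKK'
        obtain ⟨x₀, hx₀⟩ := hφsurj K.1 K.2 (Multiplicative.ofAdd 1)
        have hval := DFunLike.congr_fun h x₀
        have : (u2e u) (φ K.1 K.2 x₀) = (u2e u') (φ K.1 K.2 x₀) := hval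
        rw [hx₀, u2e_apply, u2e_apply, mul_one, mul_one] at this
        have : (u : ZMod p) = (u' : ZMod p) := Multiplicative.ofAdd.injective this
        rw [Units.ext this]
  -- every hom kills M
  have hMker : ∀ f : G →* Multiplicative (ZMod p), M ≤ f.ker := by
    intro f
    refine sup_le ?_ ?_
    · rw [commutator_def, Subgroup.commutator_le]
      intro a _ b _
      rw [MonoidHom.mem_ker, map_commutatorElement]
      exact commutatorElement_eq_one_iff_mul_comm.2 (mul_comm _ _)
    · rw [Subgroup.closure_le]
      rintro _ ⟨x, rfl⟩
      rw [SetLike.mem_coe, MonoidHom.mem_ker, map_pow]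
      rw [← ofAdd_toAdd (f x), ← ofAdd_nsmul, nsmul_eq_mul, ZMod.natCast_self, zero_mul,
        ofAdd_zero]
  let lift1 : (G →* Multiplicative (ZMod p)) → ((G ⧸ M) →* Multiplicative (ZMod p)) :=
    fun f => QuotientGroup.lift M f (hMker f)
  have hlift1 : Function.Injective lift1 := by
    intro f f' h
    ext x
    have := DFunLike.congr_fun h (QuotientGroup.mk x)
    simpa [lift1] using this
  -- basis of the quotient as ZMod p vector space
  set d := Module.finrank (ZMod p) (Additive (G ⧸ M)) with hd
  haveI fQ : Module.Finite (ZMod p) (Additive (G ⧸ M)) :=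
    @Module.Finite.of_finite (ZMod p) (Additive (G ⧸ M)) _ _ _ _
  haveI fr : Module.Free (ZMod p) (Additive (G ⧸ M)) :=
    @Module.Free.of_divisionRing (ZMod p) (Additive (G ⧸ M)) _ _ _
  haveI sr : StrongRankCondition (ZMod p) := inferInstance
  let b : Module.Basis (Fin d) (ZMod p) (Additive (G ⧸ M)) :=
    Module.finBasis (ZMod p) (Additive (G ⧸ M))
  haveI : Finite (G →* Multiplicative (ZMod p)) :=
    Finite.of_injective _ (DFunLike.coe_injective (F := G →* Multiplicative (ZMod p)))
  haveI : Finite ((G ⧸ M) →* Multiplicative (ZMod p)) :=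
    Finite.of_injective _ (DFunLike.coe_injective (F := (G ⧸ M) →* Multiplicative (ZMod p)))
  -- count of homs out of the quotient
  have count2 : Nat.card ((G ⧸ M) →* Multiplicative (ZMod p)) ≤ p ^ d := by
    let toLin : ((G ⧸ M) →* Multiplicative (ZMod p)) → (Additive (G ⧸ M) →ₗ[ZMod p] ZMod p) :=
      fun f =>
        { toFun := MonoidHom.toAdditiveLeft f,
          map_add' := (MonoidHom.toAdditiveLeft f).map_add,
          map_smul' := fun c x => ZMod.map_smul (MonoidHom.toAdditiveLeft f) c x }
    have hinj : Function.Injective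
        (fun (f : (G ⧸ M) →* Multiplicative (ZMod p)) (i : Fin d) =>
          (MonoidHom.toAdditiveLeft f) (b i)) := by
      intro f f' h
      have hL : toLin f = toLin f' := by
        apply Module.Basis.ext b
        intro i
        exact congrFun h i
      apply MonoidHom.ext
      intro x
      have h2 := DFunLike.congr_fun hL (Additive.ofMul x)
      simpa [toLin] using h2
    calc Nat.card ((G ⧸ M) →* Multiplicative (ZMod p))
        ≤ Nat.card (Fin d → ZMod p) := Nat.card_le_card_of_injective _ hinj
      _ = p ^ d := by
          rw [Nat.card_fun]
          simp [Nat.card_zmod, Nat.card_eq_fintype_card]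
  have hcardQd : Nat.card (G ⧸ M) = p ^ d := by
    haveI : Fintype (Additive (G ⧸ M)) := Fintype.ofFinite _
    have h1 : Nat.card (G ⧸ M) = Fintype.card (Additive (G ⧸ M)) := by
      rw [← Nat.card_eq_fintype_card]
      exact Nat.card_congr Additive.ofMul
    rw [h1, Module.card_fintype b]
    simp [ZMod.card]
  -- main inequality
  have hopt : Nat.card (Option ({K // K ∈ S} × (ZMod p)ˣ)) = S.card * (p - 1) + 1 := by
    rw [Nat.card_eq_fintype_card, Fintype.card_option, Fintype.card_prod, Fintype.card_coe,
      ZMod.card_units p]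
  have main : p ^ (2 * g) ≤ Nat.card (G ⧸ M) := by
    have hdvd : (p - 1) ∣ p ^ (2 * g) - 1 := by
      simpa using Nat.sub_dvd_pow_sub_pow p 1 (2 * g)
    have h2 : p ^ (2 * g) - 1 ≤ (p - 1) * S.card := by
      have := Nat.mul_le_mul_left (p - 1) hcard
      rwa [Nat.mul_div_cancel' hdvd] at this
    have hpos : 0 < p ^ (2 * g) := pow_pos hp.pos _
    have c1 : Nat.card (Option ({K // K ∈ S} × (ZMod p)ˣ))
        ≤ Nat.card (G →* Multiplicative (ZMod p)) := Nat.card_le_card_of_injective Ψ hΨ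
    have c2 : Nat.card (G →* Multiplicative (ZMod p))
        ≤ Nat.card ((G ⧸ M) →* Multiplicative (ZMod p)) :=
      Nat.card_le_card_of_injective lift1 hlift1
    rw [hopt] at c1
    have h3 : p ^ (2 * g) ≤ S.card * (p - 1) + 1 := by
      calc p ^ (2 * g) = (p ^ (2 * g) - 1) + 1 := (Nat.succ_pred_eq_of_pos hpos).symm
        _ ≤ (p - 1) * S.card + 1 := Nat.add_le_add_right h2 1
        _ = S.card * (p - 1) + 1 := by ring
    have h4 := le_trans (le_trans h3 (le_trans c1 c2)) count2
    exact h4.trans_eq hcardQd.symm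
  -- conclude M = ⊥
  have hprod := Subgroup.card_eq_card_quotient_mul_card_subgroup M
  have hMpos : 1 ≤ Nat.card M := Nat.one_le_iff_ne_zero.2 Nat.card_pos.ne'
  have hQle : Nat.card (G ⧸ M) ≤ p ^ (2 * g) := by
    calc Nat.card (G ⧸ M) = Nat.card (G ⧸ M) * 1 := (mul_one _).symm
      _ ≤ Nat.card (G ⧸ M) * Nat.card M := Nat.mul_le_mul_left _ hMpos
      _ = Nat.card G := hprod.symm
      _ = p ^ (2 * g) := hG
  have hQeq : Nat.card (G ⧸ M) = p ^ (2 * g) := le_antisymm hQle main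
  have hMcard : Nat.card M = 1 := by
    have hpos : 0 < p ^ (2 * g) := pow_pos hp.pos _
    rw [hG, hQeq] at hprod
    have : p ^ (2 * g) * 1 = p ^ (2 * g) * Nat.card M := by rw [mul_one]; exact hprod
    exact (Nat.eq_of_mul_eq_mul_left hpos this).symm
  have hMbot : M = ⊥ := Subgroup.card_eq_one.mp hMcard
  -- dimension equals 2g
  have hdim : d = 2 * g := by
    have hpw : p ^ d = p ^ (2 * g) := by rw [← hcardQd, hQeq]
    exact Nat.pow_right_injective hp.two_le hpw
  -- assemble the isomorphism
  let e0 : G ≃* (G ⧸ M) := ((QuotientGroup.quotientMulEquivOfEq hMbot).trans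
    QuotientGroup.quotientBot).symm
  let e1 : (G ⧸ M) ≃* Multiplicative (Additive (G ⧸ M)) :=
    (MulEquiv.multiplicativeAdditive (G ⧸ M)).symm
  let e2 : Additive (G ⧸ M) ≃+ (Fin (2 * g) → ZMod p) :=
    (b.reindex (finCongr hdim)).equivFun.toAddEquiv
  exact ⟨(e0.trans e1).trans (AddEquiv.toMultiplicative e2)⟩
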